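/- Let Ω ⊆ 𝕆 be a domain that is star-shaped with respect to a point a on the real axis. Then any two points x, x' ∈ Ω with Re(x) = Re(x') and |Im(x)| = |Im(x')| are CCL-connected in Ω: there exist two circular liftings in Ω with a common base path and spherical coordinates sharing the same initial value, whose terminal points are x and x' respectively. -/

import Mathlib

noncomputable section

/-- The octonions, realized as the Cayley–Dickson double of the quaternions. -/
@[ext] structure Octonion : Type where
  a : Quaternion ℝ
  b : Quaternion ℝ

notation "𝕆" => Octonion

namespace Octonion

instance : Zero 𝕆 := ⟨⟨0, 0⟩⟩
instance : One 𝕆 := ⟨⟨1, 0⟩⟩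
instance : Add 𝕆 := ⟨fun x y => ⟨x.a + y.a, x.b + y.b⟩⟩
instance : Neg 𝕆 := ⟨fun x => ⟨-x.a, -x.b⟩⟩
instance : Sub 𝕆 := ⟨fun x y => ⟨x.a - y.a, x.b - y.b⟩⟩
/-- Cayley–Dickson multiplication. -/
instance : Mul 𝕆 := ⟨fun x y => ⟨x.a * y.a - star y.b * x.b, y.b * x.a + x.b * star y.a⟩⟩
instance : SMul ℝ 𝕆 := ⟨fun r x => ⟨r • x.a, r • x.b⟩⟩
instance : SMul ℕ 𝕆 := ⟨fun n x => ⟨n • x.a, n • x.b⟩⟩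
instance : SMul ℤ 𝕆 := ⟨fun n x => ⟨n • x.a, n • x.b⟩⟩

def toProd (x : 𝕆) : Quaternion ℝ × Quaternion ℝ := (x.a, x.b)

lemma toProd_injective : Function.Injective toProd := by
  intro x y h
  cases x; cases y
  simpa [toProd, Prod.ext_iff, Octonion.mk.injEq] using h

instance : AddCommGroup 𝕆 :=
  Function.Injective.addCommGroup toProd toProd_injective rfl (fun _ _ => rfl) (fun _ => rfl)
    (fun _ _ => rfl) (fun _ _ => rfl) (fun _ _ => rfl)

def toProdHom : 𝕆 →+ Quaternion ℝ × Quaternion ℝ :=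
  { toFun := toProd, map_zero' := rfl, map_add' := fun _ _ => rfl }

instance : Module ℝ 𝕆 :=
  Function.Injective.module ℝ toProdHom toProd_injective (fun _ _ => rfl)

def toProdLin : 𝕆 →ₗ[ℝ] Quaternion ℝ × Quaternion ℝ :=
  { toFun := toProd, map_add' := fun _ _ => rfl, map_smul' := fun _ _ => rfl }

instance : NormedAddCommGroup 𝕆 := NormedAddCommGroup.induced 𝕆 _ toProdHom toProd_injective
instance : NormedSpace ℝ 𝕆 := NormedSpace.induced ℝ 𝕆 _ toProdLin

/-- Octonionic conjugation. -/
def conj (x : 𝕆) : 𝕆 := ⟨star x.a, -x.b⟩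

/-- The real part of an octonion. -/
def re (x : 𝕆) : ℝ := x.a.re

/-- The imaginary part of an octonion. -/
def im (x : 𝕆) : 𝕆 := ⟨x.a.im, x.b⟩

/-- The squared (Euclidean) norm of an octonion. -/
def normSq (x : 𝕆) : ℝ := Quaternion.normSq x.a + Quaternion.normSq x.b

/-- The (Euclidean) norm of an octonion. -/
def onorm (x : 𝕆) : ℝ := Real.sqrt (normSq x)

instance : Inv 𝕆 := ⟨fun x => (normSq x)⁻¹ • conj x⟩

/-- The sphere of imaginary units of `𝕆`. -/
def sph : Set 𝕆 := {I | onorm I = 1 ∧ re I = 0}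

/-- `tau I (α + β i) = α + β I`. -/
def tau (I : 𝕆) (z : ℂ) : 𝕆 := z.re • (1 : 𝕆) + z.im • I

end Octonion

namespace Octonion

/-- `γ` and `Θ` define a circular lifting `t ↦ τ_{Θ t}(γ t)`: `γ` is a continuous path in `ℂ`
(the base) and `Θ` a continuous path in the sphere of imaginary units (the spherical
coordinate). -/
def IsCircularLifting (γ : unitInterval → ℂ) (Θ : unitInterval → 𝕆) : Prop :=
  Continuous γ ∧ Continuous Θ ∧ ∀ t, Θ t ∈ sph

/-- `x` and `x'` are CCL-connected in `Ω`: they are the terminal points of a pair of coupled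
circular liftings contained in `Ω` (common base, same initial spherical coordinate). -/
def CCLConnected (Ω : Set 𝕆) (x x' : 𝕆) : Prop :=
  ∃ γ Θ₁ Θ₂, IsCircularLifting γ Θ₁ ∧ IsCircularLifting γ Θ₂ ∧ Θ₁ 0 = Θ₂ 0 ∧
    (∀ t, tau (Θ₁ t) (γ t) ∈ Ω) ∧ (∀ t, tau (Θ₂ t) (γ t) ∈ Ω) ∧
    tau (Θ₁ 1) (γ 1) = x ∧ tau (Θ₂ 1) (γ 1) = x'

/-- CCL-equivalence in `Ω`: the equivalence closure of CCL-connectedness (finite chains). -/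
def CCLEquiv (Ω : Set 𝕆) : 𝕆 → 𝕆 → Prop := Relation.EqvGen (CCLConnected Ω)

end Octonion

namespace Octonion

lemma a_add (x y : 𝕆) : (x + y).a = x.a + y.a := rfl
lemma a_smul (c : ℝ) (x : 𝕆) : (c • x).a = c • x.a := rfl
lemma a_neg (x : 𝕆) : (-x).a = -x.a := rfl
lemma b_add (x y : 𝕆) : (x + y).b = x.b + y.b := rfl
lemma b_smul (c : ℝ) (x : 𝕆) : (c • x).b = c • x.b := rfl
lemma a_one : (1 : 𝕆).a = 1 := rfl
lemma b_one : (1 : 𝕆).b = 0 := rfl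
lemma a_zero : (0 : 𝕆).a = 0 := rfl
lemma b_zero : (0 : 𝕆).b = 0 := rfl

lemma re_add' (x y : 𝕆) : re (x + y) = re x + re y := by
  simp [re, a_add]

lemma re_smul' (c : ℝ) (x : 𝕆) : re (c • x) = c * re x := by
  simp [re, a_smul]

lemma re_one' : re (1 : 𝕆) = 1 := by simp [re, a_one]; rfl

lemma re_im (x : 𝕆) : re (im x) = 0 := by simp [re, im]

lemma normSq_nonneg' (x : 𝕆) : 0 ≤ normSq x :=
  add_nonneg (Quaternion.normSq_nonneg) (Quaternion.normSq_nonneg)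

lemma b_neg (x : 𝕆) : (-x).b = -x.b := rfl

lemma normSq_eq_zero' (x : 𝕆) : normSq x = 0 ↔ x = 0 := by
  constructor
  · intro h
    have h' : Quaternion.normSq x.a + Quaternion.normSq x.b = 0 := h
    have ha : Quaternion.normSq x.a = 0 := by
      nlinarith [Quaternion.normSq_nonneg (a := x.a), Quaternion.normSq_nonneg (a := x.b)]
    have hb : Quaternion.normSq x.b = 0 := by
      nlinarith [Quaternion.normSq_nonneg (a := x.a), Quaternion.normSq_nonneg (a := x.b)]
    refine Octonion.ext ?_ ?_
    · exact Quaternion.normSq_eq_zero.mp ha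
    · exact Quaternion.normSq_eq_zero.mp hb
  · rintro rfl; simp [normSq, a_zero, b_zero]

lemma onorm_nonneg' (x : 𝕆) : 0 ≤ onorm x := Real.sqrt_nonneg _

lemma onorm_eq_zero' (x : 𝕆) : onorm x = 0 ↔ x = 0 := by
  rw [onorm, Real.sqrt_eq_zero (normSq_nonneg' x), normSq_eq_zero']

lemma normSq_smul' (c : ℝ) (x : 𝕆) : normSq (c • x) = c ^ 2 * normSq x := by
  simp [normSq, a_smul, b_smul, Quaternion.normSq_smul, mul_add]

lemma onorm_smul' (c : ℝ) (x : 𝕆) : onorm (c • x) = |c| * onorm x := by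
  rw [onorm, normSq_smul', Real.sqrt_mul (sq_nonneg c), Real.sqrt_sq_eq_abs, onorm]

lemma normSq_neg' (x : 𝕆) : normSq (-x) = normSq x := by
  simp [normSq, a_neg, b_neg, Quaternion.normSq_neg]

lemma onorm_neg' (x : 𝕆) : onorm (-x) = onorm x := by rw [onorm, normSq_neg', onorm]

lemma re_add_im' (x : 𝕆) : re x • (1 : 𝕆) + im x = x := by
  refine Octonion.ext ?_ ?_
  · show re x • (1 : Quaternion ℝ) + x.a.im = x.a
    rw [← Quaternion.coe_one, Quaternion.smul_coe, mul_one]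
    exact x.a.re_add_im
  · show re x • (0 : Quaternion ℝ) + x.b = x.b
    simp

end Octonion

namespace Octonion

lemma continuous_a : Continuous (fun x : 𝕆 => x.a) := by
  have h : Isometry toProd := by
    refine AddMonoidHomClass.isometry_of_norm toProdHom ?_
    intro x; rfl
  exact continuous_fst.comp h.continuous

lemma continuous_b : Continuous (fun x : 𝕆 => x.b) := by
  have h : Isometry toProd := by
    refine AddMonoidHomClass.isometry_of_norm toProdHom ?_
    intro x; rfl
  exact continuous_snd.comp h.continuous

lemma continuous_onorm : Continuous onorm := by
  have : Continuous normSq :=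
    (Quaternion.continuous_normSq.comp continuous_a).add
      (Quaternion.continuous_normSq.comp continuous_b)
  exact Real.continuous_sqrt.comp this

/-- fixed imaginary units -/
def e₁ : 𝕆 := ⟨⟨0,1,0,0⟩, 0⟩
def e₂ : 𝕆 := ⟨⟨0,0,1,0⟩, 0⟩

lemma e₁_mem : e₁ ∈ sph := by
  constructor
  · show Real.sqrt (Quaternion.normSq (⟨0,1,0,0⟩ : Quaternion ℝ) + Quaternion.normSq 0) = 1
    have h : Quaternion.normSq (⟨0,1,0,0⟩ : Quaternion ℝ) = 1 := (Quaternion.normSq_def' _).trans (by norm_num)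
    simp [h]
  · show (⟨0,1,0,0⟩ : Quaternion ℝ).re = 0
    rfl

lemma e₂_mem : e₂ ∈ sph := by
  constructor
  · show Real.sqrt (Quaternion.normSq (⟨0,0,1,0⟩ : Quaternion ℝ) + Quaternion.normSq 0) = 1
    have h : Quaternion.normSq (⟨0,0,1,0⟩ : Quaternion ℝ) = 1 := (Quaternion.normSq_def' _).trans (by norm_num)
    simp [h]
  · show (⟨0,0,1,0⟩ : Quaternion ℝ).re = 0
    rfl

lemma e₁_ne_e₂ : e₁ ≠ e₂ := by
  intro h
  have : (1 : ℝ) = 0 := congrArg (fun x : 𝕆 => x.a.imI) h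
  norm_num at this

lemma e₁_ne_neg_e₂ : e₁ ≠ -e₂ := by
  intro h
  have : (1 : ℝ) = -0 := congrArg (fun x : 𝕆 => x.a.imI) h
  norm_num at this

end Octonion

namespace Octonion

lemma sph_path_aux {I I' : 𝕆} (hI : I ∈ sph) (hI' : I' ∈ sph) (h : I + I' ≠ 0) :
    ∃ P : ℝ → 𝕆, Continuous P ∧ P 0 = I ∧ P 1 = I' ∧ ∀ s, P s ∈ sph := by
  set u : ℝ → 𝕆 := fun c => (1 - c) • I + c • I' with hu_def
  have hu : ∀ c, 0 ≤ c → c ≤ 1 → u c ≠ 0 := by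
    intro c h0 h1 hc
    have h2 : (1 - c) • I = -(c • I') := eq_neg_of_add_eq_zero_left hc
    have h3 : onorm ((1 - c) • I) = onorm (-(c • I')) := congrArg onorm h2
    rw [onorm_neg', onorm_smul', onorm_smul', hI.1, hI'.1, mul_one, mul_one,
      abs_of_nonneg (by linarith), abs_of_nonneg h0] at h3
    have hc2 : c = 1 / 2 := by linarith
    subst hc2
    have h4 : ((1 : ℝ) / 2) • (I + I') = 0 := by
      rw [smul_add]
      convert hc using 2
      norm_num
    rcases smul_eq_zero.mp h4 with h5 | h5
    · norm_num at h5
    · exact h h5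
  set cl : ℝ → ℝ := fun s => min 1 (max 0 s) with hcl_def
  have hcl0 : ∀ s, 0 ≤ cl s := fun s => le_min (by norm_num) (le_max_left 0 s)
  have hcl1 : ∀ s, cl s ≤ 1 := fun s => min_le_left _ _
  have hcl_cont : Continuous cl := continuous_const.min (continuous_const.max continuous_id)
  have hpos : ∀ s : ℝ, 0 < onorm (u (cl s)) := by
    intro s
    rcases lt_or_eq_of_le (onorm_nonneg' (u (cl s))) with h' | h'
    · exact h'
    · exact absurd ((onorm_eq_zero' _).mp h'.symm) (hu _ (hcl0 s) (hcl1 s))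
  refine ⟨fun s => (onorm (u (cl s)))⁻¹ • u (cl s), ?_, ?_, ?_, ?_⟩
  · have hucont : Continuous fun s => u (cl s) :=
      ((continuous_const.sub hcl_cont).smul continuous_const).add
        (hcl_cont.smul continuous_const)
    exact ((continuous_onorm.comp hucont).inv₀ fun s => (hpos s).ne').smul hucont
  · show (onorm (u (cl 0)))⁻¹ • u (cl 0) = I
    have h0 : cl 0 = 0 := by simp [hcl_def]
    rw [h0]
    show (onorm ((1 - 0) • I + (0 : ℝ) • I'))⁻¹ • ((1 - 0) • I + (0 : ℝ) • I') = I
    simp [hI.1]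
  · show (onorm (u (cl 1)))⁻¹ • u (cl 1) = I'
    have h1 : cl 1 = 1 := by simp [hcl_def]
    rw [h1]
    show (onorm ((1 - 1) • I + (1 : ℝ) • I'))⁻¹ • ((1 - 1) • I + (1 : ℝ) • I') = I'
    simp [hI'.1]
  · intro s
    constructor
    · rw [onorm_smul', abs_of_nonneg (inv_nonneg.mpr (hpos s).le),
        inv_mul_cancel₀ (hpos s).ne']
    · rw [re_smul']
      have : re (u (cl s)) = 0 := by
        show re ((1 - cl s) • I + cl s • I') = 0
        rw [re_add', re_smul', re_smul', hI.2, hI'.2]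
        ring
      rw [this, mul_zero]

lemma sph_path {I I' : 𝕆} (hI : I ∈ sph) (hI' : I' ∈ sph) :
    ∃ P : ℝ → 𝕆, Continuous P ∧ P 0 = I ∧ P 1 = I' ∧ ∀ s, P s ∈ sph := by
  by_cases h : I + I' = 0
  · -- I' = -I; go through an intermediate point e ∉ {I, -I}
    have hI'eq : I' = -I := by linear_combination (norm := module) h
    obtain ⟨e, he, he1, he2⟩ : ∃ e, e ∈ sph ∧ I + e ≠ 0 ∧ e + I' ≠ 0 := by
      by_cases h1 : I = e₁ ∨ I = -e₁
      · refine ⟨e₂, e₂_mem, ?_, ?_⟩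
        · intro hh
          rcases h1 with h1 | h1
          · exact e₁_ne_neg_e₂ (by linear_combination (norm := module) hh - h1)
          · exact e₁_ne_e₂ (by linear_combination (norm := module) - hh + h1)
        · rw [hI'eq]
          intro hh
          rcases h1 with h1 | h1
          · exact e₁_ne_e₂ (by linear_combination (norm := module) - hh - h1)
          · exact e₁_ne_neg_e₂ (by linear_combination (norm := module) hh + h1)
      · push_neg at h1
        refine ⟨e₁, e₁_mem, ?_, ?_⟩
        · intro hh
          exact h1.2 (by linear_combination (norm := module) hh)
        · rw [hI'eq]
          intro hh
          exact h1.1 (by linear_combination (norm := module) - hh)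
    obtain ⟨P₁, hP₁c, hP₁0, hP₁1, hP₁m⟩ := sph_path_aux hI he he1
    obtain ⟨P₂, hP₂c, hP₂0, hP₂1, hP₂m⟩ := sph_path_aux he hI' he2
    refine ⟨fun s => if s ≤ 1/2 then P₁ (2*s) else P₂ (2*s - 1), ?_, ?_, ?_, ?_⟩
    · refine Continuous.if_le (hP₁c.comp (by fun_prop)) (hP₂c.comp (by fun_prop))
        continuous_id continuous_const ?_
      intro s hs
      subst hs
      norm_num [hP₁1, hP₂0]
    · norm_num [hP₁0]
    · norm_num [hP₂1]
    · intro s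
      dsimp only
      split_ifs
      · exact hP₁m _
      · exact hP₂m _
  · exact sph_path_aux hI hI' h

end Octonion

namespace Octonion

lemma onorm_zero' : onorm (0 : 𝕆) = 0 := (onorm_eq_zero' 0).mpr rfl

lemma exists_unit_decomp (x : 𝕆) :
    ∃ I ∈ sph, x = re x • (1 : 𝕆) + onorm (im x) • I := by
  by_cases h : im x = 0
  · refine ⟨e₁, e₁_mem, ?_⟩
    rw [h, onorm_zero', zero_smul, ← h, re_add_im']
  · have hβ : onorm (im x) ≠ 0 := fun hh => h ((onorm_eq_zero' _).mp hh)
    have hβpos : 0 < onorm (im x) := lt_of_le_of_ne (onorm_nonneg' _) (Ne.symm hβ)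
    refine ⟨(onorm (im x))⁻¹ • im x, ⟨?_, ?_⟩, ?_⟩
    · rw [onorm_smul', abs_of_nonneg (inv_nonneg.mpr hβpos.le), inv_mul_cancel₀ hβ]
    · rw [re_smul', re_im, mul_zero]
    · rw [smul_inv_smul₀ hβ, re_add_im']

end Octonion

set_option linter.unusedVariables false in
open Octonion in
/-- in a domain star-shaped with respect to a point of the real axis, any two
points with the same real part and imaginary parts of the same norm are CCL-connected. -/
theorem stmt11 (Ω : Set 𝕆) (hΩo : IsOpen Ω) (hΩne : Ω.Nonempty) (r : ℝ)
    (hstar : StarConvex ℝ (r • (1 : 𝕆)) Ω) (x x' : 𝕆) (hx : x ∈ Ω) (hx' : x' ∈ Ω)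
    (hre : re x = re x') (him : onorm (im x) = onorm (im x')) :
    CCLConnected Ω x x' := by
  obtain ⟨I₁, hI₁, hx1⟩ := exists_unit_decomp x
  obtain ⟨I₂, hI₂, hx2⟩ := exists_unit_decomp x'
  set α := re x with hα
  set β := onorm (im x) with hβ
  have hx2' : x' = α • (1 : 𝕆) + β • I₂ := by rw [hre, him]; exact hx2
  have hβ0 : 0 ≤ β := onorm_nonneg' _
  obtain ⟨P, hPc, hP0, hP1, hPm⟩ := sph_path hI₁ hI₂
  set f : ℝ → ℝ := fun t => max 0 (1 - 3 * t) + max 0 (3 * t - 2) with hf_def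
  set g : ℝ → ℝ := fun t => min 1 (max 0 (3 * t - 1)) with hg_def
  have hf0 : ∀ t, 0 ≤ f t := fun t => add_nonneg (le_max_left _ _) (le_max_left _ _)
  have hf1 : ∀ t : ℝ, 0 ≤ t → t ≤ 1 → f t ≤ 1 := by
    intro t h0 h1
    rcases le_total t (2 / 3) with h | h
    · have h2 : max 0 (3 * t - 2) = 0 := max_eq_left (by linarith)
      have h3 : max 0 (1 - 3 * t) ≤ 1 := max_le (by norm_num) (by linarith)
      simp only [hf_def]; linarith
    · have h2 : max 0 (1 - 3 * t) = 0 := max_eq_left (by linarith)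
      have h3 : max 0 (3 * t - 2) ≤ 1 := max_le (by norm_num) (by linarith)
      simp only [hf_def]; linarith
  have hfc : Continuous f := by
    apply Continuous.add <;> exact continuous_const.max (by fun_prop)
  have hgc : Continuous g := continuous_const.min (continuous_const.max (by fun_prop))
  set γ₀ : ℝ → ℂ := fun t => ((r + f t * (α - r) : ℝ) : ℂ) + ((f t * β : ℝ) : ℂ) * Complex.I
    with hγ₀_def
  have hγ₀c : Continuous γ₀ := by fun_prop
  have htau : ∀ (I : 𝕆) (t : ℝ),
      tau I (γ₀ t) = (1 - f t) • (r • (1 : 𝕆)) + f t • (α • (1 : 𝕆) + β • I) := by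
    intro I t
    show (γ₀ t).re • (1 : 𝕆) + (γ₀ t).im • I = _
    have hre' : (γ₀ t).re = r + f t * (α - r) := by simp [hγ₀_def]
    have him' : (γ₀ t).im = f t * β := by simp [hγ₀_def]
    rw [hre', him']
    module
  have hr1 : r • (1 : 𝕆) ∈ Ω := by
    obtain ⟨y, hy⟩ := hΩne
    have := hstar hy zero_le_one le_rfl (add_zero 1)
    simpa using this
  refine ⟨fun t => γ₀ t.val, fun _ => I₁, fun t => P (g t.val), ⟨?_, ?_, ?_⟩, ⟨?_, ?_, ?_⟩,
    ?_, ?_, ?_, ?_, ?_⟩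
  · exact hγ₀c.comp continuous_subtype_val
  · exact continuous_const
  · exact fun _ => hI₁
  · exact hγ₀c.comp continuous_subtype_val
  · exact (hPc.comp hgc).comp continuous_subtype_val
  · exact fun t => hPm _
  · show I₁ = P (g ((0 : unitInterval) : ℝ))
    have : g ((0 : unitInterval) : ℝ) = 0 := by
      simp [hg_def]
    rw [this, hP0]
  · -- Θ₁ route membership
    intro t
    rw [htau I₁ t.val, ← hx1]
    exact hstar hx (by linarith [hf1 t.val t.2.1 t.2.2]) (hf0 t.val) (by ring)
  · -- Θ₂ route membership
    intro t
    obtain ⟨ht0, ht1⟩ := t.2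
    rw [htau (P (g t.val)) t.val]
    rcases le_total t.val (1 / 3) with h | h
    · have hg0 : g t.val = 0 := by
        simp only [hg_def]
        rw [max_eq_left (by linarith), min_eq_right zero_le_one]
      rw [hg0, hP0, ← hx1]
      exact hstar hx (by linarith [hf1 t.val ht0 ht1]) (hf0 t.val) (by ring)
    · rcases le_total t.val (2 / 3) with h' | h'
      · have hf00 : f t.val = 0 := by
          simp only [hf_def]
          rw [max_eq_left (by linarith), max_eq_left (by linarith), add_zero]
        rw [hf00]
        simpa using hr1
      · have hg1 : g t.val = 1 := by
          simp only [hg_def]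
          rw [max_eq_right (by linarith), min_eq_left (by linarith)]
        rw [hg1, hP1, ← hx2']
        exact hstar hx' (by linarith [hf1 t.val ht0 ht1]) (hf0 t.val) (by ring)
  · -- terminal point of first lifting
    show tau I₁ (γ₀ ((1 : unitInterval) : ℝ)) = x
    rw [htau]
    have hfone : f ((1 : unitInterval) : ℝ) = 1 := by
      simp only [hf_def]
      norm_num
    rw [hfone, ← hx1]
    simp
  · -- terminal point of second lifting
    show tau (P (g ((1 : unitInterval) : ℝ))) (γ₀ ((1 : unitInterval) : ℝ)) = x'
    have hgone : g ((1 : unitInterval) : ℝ) = 1 := by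
      simp only [hg_def]
      norm_num
    rw [hgone, hP1, htau]
    have hfone : f ((1 : unitInterval) : ℝ) = 1 := by
      simp only [hf_def]
      norm_num
    rw [hfone, ← hx2']
    simp
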